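/- Let S be a symplectic Hilbert space with compatible complex structure J, and let I be a closed isotropic subspace of S. Define the symplectic reduction S_I := I^♯ ∩ I^⊥. Then the orthogonal complement of S_I in S equals I ⊕ JI, and S_I^⊥ = I ⊕ JI is itself a symplectic subspace in which I and JI are transverse Lagrangian subspaces. -/

import Mathlib

open RealInnerProductSpace

variable {S : Type*} [NormedAddCommGroup S] [InnerProductSpace ℝ S] [CompleteSpace S]

/-- The symplectic annihilator of `W` with respect to the symplectic form
`ω u v = ⟪J u, v⟫`. -/
def sympAnn (J : S →ₗ[ℝ] S) (W : Submodule ℝ S) : Submodule ℝ S where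
  carrier := {v : S | ∀ u ∈ W, ⟪J u, v⟫ = 0}
  zero_mem' := by intro u _; simp
  add_mem' := by
    intro a b ha hb u hu
    rw [inner_add_right, ha u hu, hb u hu, add_zero]
  smul_mem' := by
    intro c a ha u hu
    rw [real_inner_smul_right, ha u hu, mul_zero]

omit [CompleteSpace S] in
lemma sympAnn_eq_ortho (J : S →ₗ[ℝ] S) (W : Submodule ℝ S) :
    sympAnn J W = (W.map J)ᗮ := by
  ext v
  constructor
  · intro hv u hu
    rcases hu with ⟨w, hw, rfl⟩
    exact hv w hw
  · intro hv u hu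
    exact hv (J u) ⟨u, hu, rfl⟩

theorem statement11
    (J : S →ₗ[ℝ] S)
    (hiso : ∀ u v : S, ⟪J u, J v⟫ = ⟪u, v⟫)
    (hJ2 : ∀ u : S, J (J u) = -u)
    (I : Submodule ℝ S) (hIc : IsClosed (I : Set S))
    (hIiso : I ≤ sympAnn J I) :
    (sympAnn J I ⊓ Iᗮ)ᗮ = I ⊔ I.map J ∧
    I ⊓ I.map J = ⊥ ∧
    (I ⊔ I.map J) ⊓ sympAnn J (I ⊔ I.map J) = ⊥ ∧
    I = sympAnn J I ⊓ (I ⊔ I.map J) ∧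
    I.map J = sympAnn J (I.map J) ⊓ (I ⊔ I.map J) := by
  -- J as a linear isometry equivalence
  have hnorm : ∀ x : S, ‖J x‖ = ‖x‖ := by
    intro x
    have := hiso x x
    rw [real_inner_self_eq_norm_sq, real_inner_self_eq_norm_sq] at this
    nlinarith [norm_nonneg (J x), norm_nonneg x]
  let Jequiv : S ≃ₗᵢ[ℝ] S :=
    { toLinearEquiv := LinearEquiv.ofLinear J (-J)
        (by ext x; simp [hJ2 x])
        (by ext x; simp [hJ2 x])
      norm_map' := hnorm }
  -- J(J I) = I
  have hmapmap : (I.map J).map J = I := by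
    ext x
    simp only [Submodule.mem_map]
    constructor
    · rintro ⟨y, ⟨z, hz, rfl⟩, rfl⟩
      rw [hJ2]
      exact I.neg_mem hz
    · intro hx
      exact ⟨J (-x), ⟨-x, I.neg_mem hx, rfl⟩, by rw [hJ2, neg_neg]⟩
  -- orthogonality of I and JI
  have hIJ : ∀ a ∈ I, ∀ b ∈ I, ⟪a, J b⟫ = 0 := by
    intro a ha b hb
    rw [real_inner_comm]
    exact hIiso ha b hb
  -- closedness / completeness
  haveI : CompleteSpace I := hIc.completeSpace_coe
  have hJIc : IsClosed ((I.map J : Submodule ℝ S) : Set S) := by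
    have : ((I.map J : Submodule ℝ S) : Set S) = Jequiv '' (I : Set S) := by
      ext x
      constructor
      · rintro ⟨y, hy, rfl⟩; exact ⟨y, hy, rfl⟩
      · rintro ⟨y, hy, rfl⟩; exact ⟨y, hy, rfl⟩
    rw [this]
    exact (Jequiv.toHomeomorph.isClosedMap) _ hIc
  haveI : CompleteSpace (I.map J) := hJIc.completeSpace_coe
  haveI hproj : Submodule.HasOrthogonalProjection (I ⊔ I.map J) := by
    constructor
    intro v
    refine ⟨(Submodule.orthogonalProjection I v : S) + (Submodule.orthogonalProjection (I.map J) v : S),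
      Submodule.add_mem_sup (Submodule.orthogonalProjection I v).2 (Submodule.orthogonalProjection (I.map J) v).2, ?_⟩
    rw [Submodule.mem_orthogonal']
    intro u hu
    have h1 : v - (Submodule.orthogonalProjection I v : S) ∈ Iᗮ := Submodule.sub_starProjection_mem_orthogonal (K := I) v
    have h2 : v - (Submodule.orthogonalProjection (I.map J) v : S) ∈ (I.map J)ᗮ := Submodule.sub_starProjection_mem_orthogonal (K := I.map J) v
    rcases Submodule.mem_sup.mp hu with ⟨a, ha, b, hb, rfl⟩
    have e1 : ⟪v - (Submodule.orthogonalProjection I v : S), a⟫ = 0 :=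
      (Submodule.mem_orthogonal' _ _).mp h1 a ha
    have e2 : ⟪v - (Submodule.orthogonalProjection (I.map J) v : S), b⟫ = 0 :=
      (Submodule.mem_orthogonal' _ _).mp h2 b hb
    rcases hb with ⟨w, hw, rfl⟩
    have e3 : ⟪(Submodule.orthogonalProjection (I.map J) v : S), a⟫ = 0 := by
      rcases (Submodule.orthogonalProjection (I.map J) v).2 with ⟨c, hc, hce⟩
      rw [← hce, real_inner_comm]
      exact hIJ a ha c hc
    have e4 : ⟪(Submodule.orthogonalProjection I v : S), J w⟫ = 0 :=
      hIJ _ (Submodule.orthogonalProjection I v).2 w hw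
    have expand : v - ((Submodule.orthogonalProjection I v : S) + (Submodule.orthogonalProjection (I.map J) v : S))
        = (v - (Submodule.orthogonalProjection I v : S)) - (Submodule.orthogonalProjection (I.map J) v : S) := by

      abel
    rw [expand, inner_add_right]
    simp only [inner_sub_left] at e1 e2 ⊢
    linarith
  -- goal 1
  have hsupIJorth : (I ⊔ I.map J)ᗮᗮ = I ⊔ I.map J := Submodule.orthogonal_orthogonal _
  have hann : sympAnn J I ⊓ Iᗮ = (I ⊔ I.map J)ᗮ := by
    rw [sympAnn_eq_ortho, ← Submodule.inf_orthogonal, inf_comm]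
  have g1 : (sympAnn J I ⊓ Iᗮ)ᗮ = I ⊔ I.map J := by
    rw [hann, hsupIJorth]
  -- goal 2
  have g2 : I ⊓ I.map J = ⊥ := by
    rw [Submodule.eq_bot_iff]
    rintro x ⟨hx1, hx2⟩
    rcases hx2 with ⟨w, hw, rfl⟩
    have : ⟪(J w : S), J w⟫ = 0 := hIJ _ hx1 w hw
    exact inner_self_eq_zero.mp this
  -- goal 3
  have hann2 : sympAnn J (I ⊔ I.map J) = (I ⊔ I.map J)ᗮ := by
    rw [sympAnn_eq_ortho, Submodule.map_sup, hmapmap, sup_comm]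
  have g3 : (I ⊔ I.map J) ⊓ sympAnn J (I ⊔ I.map J) = ⊥ := by
    rw [hann2]
    exact (Submodule.orthogonal_disjoint _).eq_bot
  -- goal 4
  have g4 : I = sympAnn J I ⊓ (I ⊔ I.map J) := by
    rw [sympAnn_eq_ortho]
    apply le_antisymm
    · refine le_inf ?_ le_sup_left
      intro x hx u hu
      rcases hu with ⟨w, hw, rfl⟩
      rw [real_inner_comm]
      exact hIJ x hx w hw
    · rintro x ⟨hx1, hx2⟩
      rcases Submodule.mem_sup.mp hx2 with ⟨a, ha, b, hb, rfl⟩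
      rcases hb with ⟨w, hw, rfl⟩
      have h0 : ⟪(J w : S), a + J w⟫ = 0 := hx1 _ ⟨w, hw, rfl⟩
      rw [inner_add_right] at h0
      have h1 : ⟪(J w : S), a⟫ = 0 := by
        rw [real_inner_comm]; exact hIJ a ha w hw
      have h2 : ⟪(J w : S), J w⟫ = 0 := by linarith
      have : J w = 0 := inner_self_eq_zero.mp h2
      rw [this, add_zero]
      exact ha
  -- goal 5
  have g5 : I.map J = sympAnn J (I.map J) ⊓ (I ⊔ I.map J) := by
    have hannJI : sympAnn J (I.map J) = Iᗮ := by
      rw [sympAnn_eq_ortho, hmapmap]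
    rw [hannJI]
    apply le_antisymm
    · refine le_inf ?_ le_sup_right
      rintro x ⟨w, hw, rfl⟩ u hu
      exact hIJ u hu w hw
    · rintro x ⟨hx1, hx2⟩
      rcases Submodule.mem_sup.mp hx2 with ⟨a, ha, b, hb, rfl⟩
      have h0 : ⟪a, a + b⟫ = 0 := hx1 a ha
      rcases hb with ⟨w, hw, rfl⟩
      rw [inner_add_right] at h0
      have h1 : ⟪a, J w⟫ = 0 := hIJ a ha w hw
      have h2 : ⟪a, a⟫ = 0 := by linarith
      have : a = 0 := inner_self_eq_zero.mp h2
      rw [this, zero_add]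
      exact ⟨w, hw, rfl⟩
  exact ⟨g1, g2, g3, g4, g5⟩
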